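/- For every s ∈ S there exists a map ŝ : 𝒞 → 𝒞 that is a lift of s and is consistent with chain structure. -/

import Mathlib

namespace Holonomy

variable {X : Type*}

/-- The extended image set `I = {X·s : s ∈ S} ∪ {X} ∪ {{x} : x ∈ X}`,
with the state set taken to be `Set.univ`. -/
def extImgs (S : Set (X → X)) : Set (Set X) :=
  {P : Set X | ∃ s ∈ S, P = s '' (Set.univ : Set X)} ∪ {(Set.univ : Set X)} ∪
    {P : Set X | ∃ x : X, P = {x}}

/-- `C` is a maximal chain (w.r.t. inclusion) inside the family `I`. -/
def IsMaxChainIn (I : Set (Set X)) (C : Set (Set X)) : Prop :=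
  C ⊆ I ∧ IsChain (· ⊆ ·) C ∧
    ∀ D : Set (Set X), D ⊆ I → IsChain (· ⊆ ·) D → C ⊆ D → D = C

/-- `𝒞`, the maximal chains in the extended image set. -/
def MaxChain (S : Set (X → X)) : Type _ :=
  {C : Set (Set X) // IsMaxChainIn (extImgs S) C}

/-- The action of `s` on a chain, `C·s = {P·s : P ∈ C}`. -/
def chainAct (C : Set (Set X)) (s : X → X) : Set (Set X) :=
  (fun P => s '' P) '' C

/-- Chains `C` and `D` agree down to `P`. -/
def AgreeDownTo (C D : Set (Set X)) (P : Set X) : Prop :=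
  P ∈ C ∧ P ∈ D ∧ ∀ Q : Set X, P ⊆ Q → (Q ∈ C ↔ Q ∈ D)

/-- `sh : 𝒞 → 𝒞` is a lift of `s`: `C·s ⊆ sh C` for every maximal chain `C`. -/
def IsLift (S : Set (X → X)) (s : X → X) (sh : MaxChain S → MaxChain S) : Prop :=
  ∀ C : MaxChain S, chainAct C.val s ⊆ (sh C).val

/-- `sh` is consistent with chain structure. -/
def Consistent (S : Set (X → X)) (s : X → X) (sh : MaxChain S → MaxChain S) : Prop :=
  ∀ (C C' : MaxChain S) (P : Set X),
    AgreeDownTo C.val C'.val P → AgreeDownTo (sh C).val (sh C').val (s '' P)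

/-- Product of a list of transformations, in left-to-right (right-action) order:
`prodList [a₁,…,a_k] = a₁⋯a_k`, i.e. `x ↦ a_k (⋯ (a₁ x))`. -/
def prodList {α : Type*} (l : List (α → α)) : α → α :=
  fun x => l.foldl (fun y f => f y) x

/-- Subduction: `P ⊆_S Q` iff `P ⊆ Q·s` for some `s ∈ S¹ = S ∪ {id}`. -/
def Subduction (S : Set (X → X)) (P Q : Set X) : Prop :=
  ∃ s ∈ insert (id : X → X) S, P ⊆ s '' Q

/-- `P ≡_S Q`. -/
def SubEquiv (S : Set (X → X)) (P Q : Set X) : Prop :=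
  Subduction S P Q ∧ Subduction S Q P

/-- Strict subduction `P ⊂_S Q`. -/
def SSubduction (S : Set (X → X)) (P Q : Set X) : Prop :=
  Subduction S P Q ∧ ¬ Subduction S Q P

/-- `P` is not a singleton. -/
def nonSingleton (P : Set X) : Prop := ¬ ∃ x : X, P = {x}

/-- The height of `Q`: the largest length of a strict subduction chain of
non-singleton members of `I` ending at `Q` (`0` for singletons, since then no
such chain exists). -/
noncomputable def height (S : Set (X → X)) (Q : Set X) : ℕ :=
  sSup {n : ℕ | ∃ l : List (Set X), l.length = n ∧
    (∀ R ∈ l, R ∈ extImgs S ∧ nonSingleton R) ∧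
    l.Chain' (SSubduction S) ∧ l.getLast? = some Q}

/-- Depth: `d(Q) = h(X) - h(Q) + 1`. -/
noncomputable def depth (S : Set (X → X)) (Q : Set X) : ℕ :=
  height S (Set.univ : Set X) - height S Q + 1

/-- The tiles of `P`: maximal elements (w.r.t. inclusion) of `{Q ∈ I : Q ⊊ P}`. -/
def tiles (S : Set (X → X)) (P : Set X) : Set (Set X) :=
  {Q | (Q ∈ extImgs S ∧ Q ⊂ P) ∧ ∀ R : Set X, R ∈ extImgs S → R ⊂ P → Q ⊆ R → Q = R}

/-- The permutator group `G_P` of `P`, as a set of permutations of `P`. -/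
def permutator (S : Set (X → X)) (P : Set X) : Set (Equiv.Perm ↥P) :=
  {σ | ∃ s ∈ S, s '' P = P ∧ ∀ p : ↥P, (σ p : X) = s (p : X)}

/-- The holonomy group `H_P` of `P`, as a set of permutations of `tiles P`. -/
def holonomyGroup (S : Set (X → X)) (P : Set X) : Set (Equiv.Perm ↥(tiles S P)) :=
  {σ | ∃ s ∈ S, s '' P = P ∧ ∀ T : ↥(tiles S P), ((σ T : Set X) : Set X) = s '' ((T : Set X) : Set X)}



/-- The state of approximation at level `i` of the positioned chain of a maximal
chain `C`: `α_1 = X`, and for `i > 1`, `α_i` is the entry of the positioned chain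
at the largest filled position `j < i`.  Since position `d(P)` of the positioned
chain of `C : X = P₁ ⊋ ⋯ ⊋ P_k` holds the successor of `P` for each non-minimal
member `P`, `α_i` is the smallest member of `C` whose immediate predecessor in
`C` has depth `< i`. -/
noncomputable def alpha (S : Set (X → X)) (C : Set (Set X)) (i : ℕ) : Set X :=
  if i ≤ 1 then Set.univ
  else ⋂₀ {Q | Q ∈ C ∧ ∀ P : Set X,
    (P ∈ C ∧ Q ⊂ P ∧ ∀ R ∈ C, Q ⊂ R → P ⊆ R) → depth S P < i}

/-- The chosen equivalence-class representatives of depth `i`. -/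
def RepsAt (S : Set (X → X)) (rep : Set X → Set X) (i : ℕ) : Set (Set X) :=
  {R | R ∈ extImgs S ∧ nonSingleton R ∧ rep R = R ∧ depth S R = i}

/-- States of the `i`-th holonomy component `ℋ_i`:
`none` is the extra state `*`, and `some (R, T)` is the tile `T` in the copy of
`tiles(R)` in the disjoint union, for `R` a representative of depth `i`. -/
def ValidAt (S : Set (X → X)) (rep : Set X → Set X) (i : ℕ)
    (t : Option (Set X × Set X)) : Prop :=
  t = none ∨ ∃ R T : Set X, t = some (R, T) ∧ R ∈ RepsAt S rep i ∧ T ∈ tiles S R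

/-- Transformations of the `i`-th holonomy component `ℋ_i` (on its state set):
either a constant map to a state of `ℋ_i`, or an element `(h₁,…,h_k)` of
`H_{R₁} × ⋯ × H_{R_k}` acting on the copy of `tiles(R_j)` by `h_j` (that is, by
`T ↦ T·s` for some `s` stabilizing `R_j`) and fixing `*`. -/
def IsHolTrans (S : Set (X → X)) (rep : Set X → Set X) (i : ℕ)
    (φ : Option (Set X × Set X) → Option (Set X × Set X)) : Prop :=
  (∃ t₀, ValidAt S rep i t₀ ∧ ∀ t, ValidAt S rep i t → φ t = t₀) ∨
  (φ none = none ∧ ∀ R ∈ RepsAt S rep i, ∃ s ∈ S, s '' R = R ∧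
    ∀ T ∈ tiles S R, φ (some (R, T)) = some (R, s '' T))

/-- `F` is an element of the wreath product `ℋ₁ ≀ ⋯ ≀ ℋ_d` of the holonomy
components: the action on each coordinate `i` depends only on the coordinates
above it (through a dependency function), and on every valid state this
component action is a transformation of `ℋ_i`. -/
def IsCascade (S : Set (X → X)) (rep : Set X → Set X) (d : ℕ)
    (F : (Fin d → Option (Set X × Set X)) → (Fin d → Option (Set X × Set X))) : Prop :=
  ∀ i : Fin d, ∃ g : (Fin d → Option (Set X × Set X)) →
      (Option (Set X × Set X) → Option (Set X × Set X)),
    (∀ t, F t i = g t (t i)) ∧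
    (∀ t t', (∀ j : Fin d, j < i → t j = t' j) → g t = g t') ∧
    (∀ t, (∀ j : Fin d, ValidAt S rep (j.val + 1) (t j)) →
      IsHolTrans S rep (i.val + 1) (g t))



/-! ### Auxiliary: deterministic greedy chain completion -/

section Greedy

variable {X : Type*}

open Classical in
/-- One greedy step: add `R` to the chain `M` if it lies in `I` and is
comparable with everything in `M`. -/
noncomputable def step (I M : Set (Set X)) (R : Set X) : Set (Set X) :=
  if R ∈ I ∧ ∀ Q ∈ M, R ⊆ Q ∨ Q ⊆ R then insert R M else M

noncomputable def completeAux (I : Set (Set X)) : Set (Set X) → List (Set X) → Set (Set X)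
  | M, [] => M
  | M, R :: l => completeAux I (step I M R) l

noncomputable def fullList (X : Type*) [Fintype X] : List (Set X) :=
  (Finset.univ : Finset (Set X)).toList

lemma mem_fullList [Fintype X] (A : Set X) : A ∈ fullList X :=
  Finset.mem_toList.2 (Finset.mem_univ _)

lemma subset_step {I M : Set (Set X)} {R : Set X} : M ⊆ step I M R := by
  unfold step; split
  · exact Set.subset_insert _ _
  · exact subset_rfl

lemma step_subset {I M : Set (Set X)} {R : Set X} (hM : M ⊆ I) : step I M R ⊆ I := by
  unfold step; split
  · next h => exact Set.insert_subset h.1 hM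
  · exact hM

lemma step_chain {I M : Set (Set X)} {R : Set X} (hM : IsChain (· ⊆ ·) M) :
    IsChain (· ⊆ ·) (step I M R) := by
  unfold step; split
  · next h => exact hM.insert (fun b hb _ => h.2 b hb)
  · exact hM

lemma subset_completeAux {I : Set (Set X)} :
    ∀ (l : List (Set X)) (M : Set (Set X)), M ⊆ completeAux I M l
  | [], M => subset_rfl
  | R :: l, M => subset_step.trans (subset_completeAux l (step I M R))

lemma completeAux_subset {I : Set (Set X)} :
    ∀ (l : List (Set X)) (M : Set (Set X)), M ⊆ I → completeAux I M l ⊆ I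
  | [], M, h => h
  | R :: l, M, h => completeAux_subset l (step I M R) (step_subset h)

lemma completeAux_chain {I : Set (Set X)} :
    ∀ (l : List (Set X)) (M : Set (Set X)), IsChain (· ⊆ ·) M →
      IsChain (· ⊆ ·) (completeAux I M l)
  | [], M, h => h
  | R :: l, M, h => completeAux_chain l (step I M R) (step_chain h)

lemma mem_completeAux {I : Set (Set X)} {R : Set X} :
    ∀ (l : List (Set X)) (M : Set (Set X)), R ∈ l → R ∈ I →
      (∀ Q ∈ completeAux I M l, R ⊆ Q ∨ Q ⊆ R) → R ∈ completeAux I M l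
  | [], M, hl, _, _ => absurd hl List.not_mem_nil
  | a :: l, M, hl, hI, hcomp => by
    rcases List.mem_cons.1 hl with rfl | hl
    · have hstep : R ∈ step I M R := by
        unfold step
        rw [if_pos ⟨hI, fun Q hQ => hcomp Q (subset_completeAux l _ (subset_step hQ))⟩]
        exact Set.mem_insert _ _
      exact subset_completeAux l _ hstep
    · exact mem_completeAux l (step I M a) hl hI (by simpa only [completeAux] using hcomp)

/-- The part of `M` lying above `Q0`. -/
def upperPart (Q0 : Set X) (M : Set (Set X)) : Set (Set X) := {Q ∈ M | Q0 ⊆ Q}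

lemma step_upperPart {I M M' : Set (Set X)} {Q0 R : Set X}
    (hM : IsChain (· ⊆ ·) M) (hM' : IsChain (· ⊆ ·) M')
    (h0 : Q0 ∈ M) (h0' : Q0 ∈ M')
    (h : upperPart Q0 M = upperPart Q0 M') :
    upperPart Q0 (step I M R) = upperPart Q0 (step I M' R) := by
  by_cases hR : Q0 ⊆ R
  · -- the addability condition depends only on the upper part
    have key : ∀ (N N' : Set (Set X)), IsChain (· ⊆ ·) N' → Q0 ∈ N' →
        upperPart Q0 N = upperPart Q0 N' →
        (∀ Q ∈ N, R ⊆ Q ∨ Q ⊆ R) → (∀ Q ∈ N', R ⊆ Q ∨ Q ⊆ R) := by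
      intro N N' hNc h0N hNN hc Q hQ
      by_cases hq : Q0 ⊆ Q
      · have : Q ∈ upperPart Q0 N := by rw [hNN]; exact ⟨hQ, hq⟩
        exact hc Q this.1
      · rcases eq_or_ne Q Q0 with rfl | hne
        · exact Or.inr hR
        · rcases hNc hQ h0N hne with h1 | h1
          · exact Or.inr (h1.trans hR)
          · exact absurd h1 hq
    have hcond : (R ∈ I ∧ ∀ Q ∈ M, R ⊆ Q ∨ Q ⊆ R) ↔ (R ∈ I ∧ ∀ Q ∈ M', R ⊆ Q ∨ Q ⊆ R) := by
      constructor
      · rintro ⟨h1, h2⟩; exact ⟨h1, key M M' hM' h0' h h2⟩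
      · rintro ⟨h1, h2⟩; exact ⟨h1, key M' M hM h0 h.symm h2⟩
    unfold step
    by_cases hc : R ∈ I ∧ ∀ Q ∈ M, R ⊆ Q ∨ Q ⊆ R
    · rw [if_pos hc, if_pos (hcond.1 hc)]
      ext Q
      simp only [upperPart, Set.mem_setOf_eq, Set.mem_insert_iff]
      constructor
      · rintro ⟨rfl | hQ, hq⟩
        · exact ⟨Or.inl rfl, hq⟩
        · have : Q ∈ upperPart Q0 M' := h ▸ ⟨hQ, hq⟩
          exact ⟨Or.inr this.1, hq⟩
      · rintro ⟨rfl | hQ, hq⟩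
        · exact ⟨Or.inl rfl, hq⟩
        · have : Q ∈ upperPart Q0 M := h.symm ▸ ⟨hQ, hq⟩
          exact ⟨Or.inr this.1, hq⟩
    · rw [if_neg hc, if_neg (fun hc' => hc (hcond.2 hc'))]
      exact h
  · -- R never enters the upper part
    have e1 : upperPart Q0 (step I M R) = upperPart Q0 M := by
      unfold step; split
      · ext Q
        simp only [upperPart, Set.mem_setOf_eq, Set.mem_insert_iff]
        constructor
        · rintro ⟨rfl | hQ, hq⟩
          · exact absurd hq hR
          · exact ⟨hQ, hq⟩
        · rintro ⟨hQ, hq⟩; exact ⟨Or.inr hQ, hq⟩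
      · rfl
    have e2 : upperPart Q0 (step I M' R) = upperPart Q0 M' := by
      unfold step; split
      · ext Q
        simp only [upperPart, Set.mem_setOf_eq, Set.mem_insert_iff]
        constructor
        · rintro ⟨rfl | hQ, hq⟩
          · exact absurd hq hR
          · exact ⟨hQ, hq⟩
        · rintro ⟨hQ, hq⟩; exact ⟨Or.inr hQ, hq⟩
      · rfl
    rw [e1, e2, h]

lemma completeAux_upperPart {I : Set (Set X)} {Q0 : Set X} :
    ∀ (l : List (Set X)) (M M' : Set (Set X)),
      IsChain (· ⊆ ·) M → IsChain (· ⊆ ·) M' → Q0 ∈ M → Q0 ∈ M' →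
      upperPart Q0 M = upperPart Q0 M' →
      upperPart Q0 (completeAux I M l) = upperPart Q0 (completeAux I M' l)
  | [], M, M', _, _, _, _, h => h
  | R :: l, M, M', hM, hM', h0, h0', h =>
    completeAux_upperPart l (step I M R) (step I M' R)
      (step_chain hM) (step_chain hM') (subset_step h0) (subset_step h0')
      (step_upperPart hM hM' h0 h0' h)

end Greedy

section ChainActFacts

variable {X : Type*}

lemma chainAct_subset_extImgs {S : Set (X → X)}
    (hS : ∀ s ∈ S, ∀ t ∈ S, (fun x => t (s x)) ∈ S) {s : X → X} (hs : s ∈ S)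
    {C : Set (Set X)} (hC : C ⊆ extImgs S) : chainAct C s ⊆ extImgs S := by
  rintro _ ⟨P, hP, rfl⟩
  rcases hC hP with (⟨t, ht, rfl⟩ | h) | ⟨x, rfl⟩
  · exact Or.inl (Or.inl ⟨fun x => s (t x), hS t ht s hs, Set.image_image s t Set.univ⟩)
  · rcases h with rfl
    exact Or.inl (Or.inl ⟨s, hs, rfl⟩)
  · exact Or.inr ⟨s x, by simp⟩

lemma chainAct_chain {s : X → X} {C : Set (Set X)} (hC : IsChain (· ⊆ ·) C) :
    IsChain (· ⊆ ·) (chainAct C s) := by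
  rintro _ ⟨P, hP, rfl⟩ _ ⟨Q, hQ, rfl⟩ _
  rcases eq_or_ne P Q with rfl | hne
  · exact Or.inl subset_rfl
  · rcases hC hP hQ hne with h | h
    · exact Or.inl (Set.image_mono h)
    · exact Or.inr (Set.image_mono h)

lemma agreeDownTo_symm {C D : Set (Set X)} {P : Set X} (h : AgreeDownTo C D P) :
    AgreeDownTo D C P :=
  ⟨h.2.1, h.1, fun Q hQ => (h.2.2 Q hQ).symm⟩

lemma upperPart_chainAct {s : X → X} {C C' : Set (Set X)} {P : Set X}
    (hC : IsChain (· ⊆ ·) C) (h : AgreeDownTo C C' P) :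
    upperPart (s '' P) (chainAct C s) ⊆ upperPart (s '' P) (chainAct C' s) := by
  rintro _ ⟨⟨Q, hQ, rfl⟩, hsub⟩
  change s '' P ⊆ s '' Q at hsub
  show s '' Q ∈ upperPart (s '' P) (chainAct C' s)
  by_cases hPQ : P ⊆ Q
  · exact ⟨⟨Q, (h.2.2 Q hPQ).1 hQ, rfl⟩, hsub⟩
  · rcases eq_or_ne Q P with rfl | hne
    · exact ⟨⟨Q, h.2.1, rfl⟩, hsub⟩
    · rcases hC hQ h.1 hne with h1 | h1
      · have heq : s '' Q = s '' P := le_antisymm (Set.image_mono h1) hsub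
        rw [heq]
        exact ⟨⟨P, h.2.1, rfl⟩, subset_rfl⟩
      · exact absurd h1 hPQ

end ChainActFacts

/-- every `s ∈ S` has a lift to the maximal chains that is
consistent with chain structure. -/
theorem exists_consistent_lift {X : Type*} [Fintype X] [Nonempty X]
    (S : Set (X → X)) (hS : ∀ s ∈ S, ∀ t ∈ S, (fun x => t (s x)) ∈ S)
    (s : X → X) (hs : s ∈ S) :
    ∃ sh : MaxChain S → MaxChain S, IsLift S s sh ∧ Consistent S s sh := by
  classical
  have hcompl : ∀ C : MaxChain S, IsMaxChainIn (extImgs S)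
      (completeAux (extImgs S) (chainAct C.val s) (fullList X)) := by
    intro C
    obtain ⟨hCI, hCc, _⟩ := C.property
    refine ⟨completeAux_subset _ _ (chainAct_subset_extImgs hS hs hCI),
      completeAux_chain _ _ (chainAct_chain hCc), ?_⟩
    intro D hDI hDc hsub
    refine Set.Subset.antisymm ?_ hsub
    intro R hR
    refine mem_completeAux _ _ (mem_fullList R) (hDI hR) ?_
    intro Q hQ
    rcases eq_or_ne R Q with rfl | hne
    · exact Or.inl subset_rfl
    · exact hDc hR (hsub hQ) hne
  refine ⟨fun C => ⟨_, hcompl C⟩, ?_, ?_⟩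
  · intro C
    exact subset_completeAux _ _
  · intro C C' P hP
    have hCc := C.property.2.1
    have hC'c := C'.property.2.1
    have hup : upperPart (s '' P) (chainAct C.val s)
        = upperPart (s '' P) (chainAct C'.val s) :=
      Set.Subset.antisymm (upperPart_chainAct hCc hP)
        (upperPart_chainAct hC'c (agreeDownTo_symm hP))
    have h0 : s '' P ∈ chainAct C.val s := ⟨P, hP.1, rfl⟩
    have h0' : s '' P ∈ chainAct C'.val s := ⟨P, hP.2.1, rfl⟩
    have hmain := completeAux_upperPart (I := extImgs S) (fullList X) _ _
      (chainAct_chain hCc) (chainAct_chain hC'c) h0 h0' hup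
    refine ⟨subset_completeAux _ _ h0, subset_completeAux _ _ h0', ?_⟩
    intro Q hQ
    constructor
    · intro hm
      have hQm : Q ∈ upperPart (s '' P)
          (completeAux (extImgs S) (chainAct C.val s) (fullList X)) := ⟨hm, hQ⟩
      rw [hmain] at hQm; exact hQm.1
    · intro hm
      have hQm : Q ∈ upperPart (s '' P)
          (completeAux (extImgs S) (chainAct C'.val s) (fullList X)) := ⟨hm, hQ⟩
      rw [← hmain] at hQm; exact hQm.1

end Holonomy
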